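/- Let Ĥ_Q^♯ ⊃ Ĥ_Q^♭ be (ε_Q, τ, C^♯)- and (ε_Q/C^♯, τ, C^♭)-strong confidence sets under Q, and Ĥ_P an (ε_P, τ)-weak confidence set under P. Let ĥ be the output of the algorithm returning any h ∈ Ĥ_Q^♯ ∩ Ĥ_P if nonempty, else ĥ_{P,Q} = argmin_{h ∈ Ĥ_Q^♭} R̂_P(h). Let ε̃_P = ε̃_P(Ĥ_Q^♭) be the (1-τ)-confidence rate of ERM over Ĥ_Q^♭ under P. Then with probability at least 1-4τ: E_Q(ĥ) ≤ δ(ε_Q, ε_P) if ε_Q > ε_{P,Q} or Ĥ_Q^♯ ∩ Ĥ_P ≠ ∅, and E_Q(ĥ) ≤ C^♭ · δ(ε_Q/C^♯, ε̃_P) otherwise. -/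

import Mathlib

noncomputable def excess {H : Type*} (R : H → ℝ) (h : H) : ℝ :=
  R h - sInf (Set.range R)

/-- Excess risk w.r.t. a subclass `H₀ ⊆ H`. -/
noncomputable def excessOn {H : Type*} (R : H → ℝ) (S : Set H) (h : H) : ℝ :=
  R h - sInf (R '' S)

def cset {H : Type*} (R : H → ℝ) (ε : ℝ) : Set H :=
  {h | excess R h ≤ ε}

/-- Weak modulus of transfer `δ(ε) = sup {E_Q(h) : E_P(h) ≤ ε}` (valued in `(-∞,∞]`). -/
noncomputable def wmod {H : Type*} (RP RQ : H → ℝ) (ε : ℝ) : EReal :=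
  sSup ((fun h => (excess RQ h : EReal)) '' cset RP ε)

/-- Strong modulus of transfer
`δ(ε₁,ε₂) = sup {E_Q(h) : h ∈ H_Q(ε₁), E_P(h;H_Q(ε₁)) ≤ ε₂}`. -/
noncomputable def smod {H : Type*} (RP RQ : H → ℝ) (ε₁ ε₂ : ℝ) : EReal :=
  sSup ((fun h => (excess RQ h : EReal)) ''
    {h | h ∈ cset RQ ε₁ ∧ excessOn RP (cset RQ ε₁) h ≤ ε₂})

noncomputable def pivot {H : Type*} (RP RQ : H → ℝ) : EReal :=
  ⨆ (ε : ℝ) (_ : 0 < ε), sInf ((fun h => (excess RQ h : EReal)) '' cset RP ε)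

section aux

variable {H : Type*}

lemma aux_bddBelow_range (R : H → ℝ) (hR : ∀ h, 0 ≤ R h) : BddBelow (Set.range R) :=
  ⟨0, by rintro _ ⟨x, rfl⟩; exact hR x⟩

lemma aux_excess_nonneg (R : H → ℝ) (hR : ∀ h, 0 ≤ R h) (h : H) : 0 ≤ excess R h := by
  have := csInf_le (aux_bddBelow_range R hR) (Set.mem_range_self (f := R) h)
  simpa [excess, sub_nonneg] using this

lemma aux_excessOn_le_excess (R : H → ℝ) (hR : ∀ h, 0 ≤ R h) {S : Set H}
    (hS : S.Nonempty) (h : H) : excessOn R S h ≤ excess R h := by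
  have : sInf (Set.range R) ≤ sInf (R '' S) := by
    refine le_csInf (hS.image R) ?_
    rintro _ ⟨x, -, rfl⟩
    exact csInf_le (aux_bddBelow_range R hR) ⟨x, rfl⟩
  exact sub_le_sub_left this _

lemma aux_le_mul {C x b : ℝ} {s : EReal} (hC : 0 < C) (hxb : x ≤ C * b)
    (hbs : (b : EReal) ≤ s) : (x : EReal) ≤ ((C : ℝ) : EReal) * s := by
  rcases eq_or_ne s ⊤ with htop | htop
  · rw [htop, EReal.mul_top_of_pos (by exact_mod_cast hC)]
    exact le_top
  · have hbot : s ≠ ⊥ := ne_bot_of_le_ne_bot (EReal.coe_ne_bot _) hbs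
    have hsr : ((s.toReal : ℝ) : EReal) = s := EReal.coe_toReal htop hbot
    have hbr : b ≤ s.toReal := by
      rw [← hsr] at hbs
      exact_mod_cast hbs
    have hx : x ≤ C * s.toReal :=
      le_trans hxb (mul_le_mul_of_nonneg_left hbr hC.le)
    calc (x : EReal) ≤ ((C * s.toReal : ℝ) : EReal) := by exact_mod_cast hx
      _ = ((C : ℝ) : EReal) * s := by rw [EReal.coe_mul, hsr]

end aux

/-- deterministic core of Theorem `double-delta`: on the intersection of
the strong/weak confidence-set events and the local ERM event, the output `ĥ` of
Algorithm 2 satisfies `E_Q(ĥ) ≤ δ(ε_Q, ε_P)` when `ε_Q > ε_{P,Q}` or the intersection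
is nonempty, and `E_Q(ĥ) ≤ C♭ · δ(ε_Q/C♯, ε̃_P)` otherwise. -/
theorem strong_adaptive_transfer {H : Type*} [Nonempty H] (RP RQ : H → ℝ)
    (hRP : ∀ h, 0 ≤ RP h) (hRQ : ∀ h, 0 ≤ RQ h)
    (εQ εP εtildeP Csharp Cflat : ℝ)
    (hεQ : 0 < εQ) (hεP : 0 < εP) (hεt : 0 < εtildeP)
    (hCs : 1 < Csharp) (hCf : 1 < Cflat)
    (HQsharp HQflat HPhat : Set H) (hsub : HQflat ⊆ HQsharp)
    -- (ε_Q, τ, C♯)-strong confidence set event: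
    (hQs : cset RQ (εQ / Csharp) ⊆ HQsharp ∧ HQsharp ⊆ cset RQ εQ)
    -- (ε_Q/C♯, τ, C♭)-strong confidence set event:
    (hQf : cset RQ (εQ / Csharp / Cflat) ⊆ HQflat ∧ HQflat ⊆ cset RQ (εQ / Csharp))
    -- (ε_P, τ)-weak confidence set event:
    (hPerm : H)
    (hPi : ∃ εhatP : ℝ, 0 < εhatP ∧ excess RP hPerm < εhatP ∧ cset RP εhatP ⊆ HPhat)
    (hPii : HPhat ⊆ cset RP εP)
    -- ERM over `Ĥ_Q^♭` under `P`, and the event that its local excess `P`-risk is ≤ ε̃_P: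
    (hPQerm : H) (hPQmem : hPQerm ∈ HQflat)
    (hPQrate : excessOn RP HQflat hPQerm ≤ εtildeP)
    -- the algorithm's output:
    (hhat : H)
    (halg : ((HQsharp ∩ HPhat).Nonempty → hhat ∈ HQsharp ∩ HPhat)
      ∧ (¬ (HQsharp ∩ HPhat).Nonempty → hhat = hPQerm)) :
    (((pivot RP RQ < (εQ : EReal)) ∨ (HQsharp ∩ HPhat).Nonempty) →
        (excess RQ hhat : EReal) ≤ smod RP RQ εQ εP)
    ∧ ((¬ ((pivot RP RQ < (εQ : EReal)) ∨ (HQsharp ∩ HPhat).Nonempty)) →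
        (excess RQ hhat : EReal) ≤
          ((Cflat : ℝ) : EReal) * smod RP RQ (εQ / Csharp) εtildeP) := by
  obtain ⟨εhatP, hεhat, hermlt, hPsub⟩ := hPi
  constructor
  · -- Case A
    intro hcase
    by_cases hne : (HQsharp ∩ HPhat).Nonempty
    · -- the intersection is nonempty: ĥ ∈ Ĥ_Q^♯ ∩ Ĥ_P
      obtain ⟨h1, h2⟩ := halg.1 hne
      have hQmem : hhat ∈ cset RQ εQ := hQs.2 h1
      have hPmem : excess RP hhat ≤ εP := hPii h2
      have hOn : excessOn RP (cset RQ εQ) hhat ≤ εP :=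
        le_trans (aux_excessOn_le_excess RP hRP ⟨hhat, hQmem⟩ hhat) hPmem
      exact le_sSup ⟨hhat, ⟨hQmem, hOn⟩, rfl⟩
    · -- intersection empty, hence pivot < εQ and ĥ = ĥ_{P,Q}
      have hpiv : pivot RP RQ < (εQ : EReal) := hcase.resolve_right hne
      have hhdef : hhat = hPQerm := halg.2 hne
      set ε0 : ℝ := min εhatP εP with hε0def
      have hε0 : 0 < ε0 := lt_min hεhat hεP
      have hle : sInf ((fun h => (excess RQ h : EReal)) '' cset RP ε0) < (εQ : EReal) := by
        refine lt_of_le_of_lt ?_ hpiv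
        exact le_iSup₂ (f := fun (ε : ℝ) (_ : 0 < ε) =>
          sInf ((fun h => (excess RQ h : EReal)) '' cset RP ε)) ε0 hε0
      obtain ⟨x, hx, hxlt⟩ := sInf_lt_iff.mp hle
      obtain ⟨h0, h0mem, rfl⟩ := hx
      have h0Q : excess RQ h0 < εQ := EReal.coe_lt_coe_iff.mp hxlt
      have h0P : excess RP h0 ≤ ε0 := h0mem
      -- h0 ∈ Ĥ_P, hence h0 ∉ Ĥ_Q^♯, hence excess RQ h0 > εQ/C♯
      have h0Phat : h0 ∈ HPhat := hPsub (le_trans h0P (min_le_left _ _))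
      have h0notS : h0 ∉ HQsharp := fun hc => hne ⟨h0, hc, h0Phat⟩
      have h0big : ¬ excess RQ h0 ≤ εQ / Csharp := fun hc => h0notS (hQs.1 hc)
      -- h0 belongs to the smod(εQ, εP) constraint set
      have h0cset : h0 ∈ cset RQ εQ := le_of_lt h0Q
      have h0On : excessOn RP (cset RQ εQ) h0 ≤ εP :=
        le_trans (le_trans (aux_excessOn_le_excess RP hRP ⟨h0, h0cset⟩ h0)
          (le_trans h0P (min_le_right _ _))) le_rfl
      have hsmod : (excess RQ h0 : EReal) ≤ smod RP RQ εQ εP :=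
        le_sSup ⟨h0, ⟨h0cset, h0On⟩, rfl⟩
      -- ĥ = ĥ_{P,Q} ∈ Ĥ_Q^♭ ⊆ cset RQ (εQ/C♯), so excess RQ ĥ ≤ εQ/C♯ ≤ excess RQ h0
      have hhmem : excess RQ hhat ≤ εQ / Csharp := hQf.2 (hhdef ▸ hPQmem)
      have : excess RQ hhat ≤ excess RQ h0 := le_trans hhmem (le_of_not_ge h0big)
      exact le_trans (EReal.coe_le_coe_iff.mpr this) hsmod
  · -- Case B: intersection empty and pivot ≥ εQ
    intro hncase
    have hne : ¬ (HQsharp ∩ HPhat).Nonempty := fun h => hncase (Or.inr h)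
    have hhdef : hhat = hPQerm := halg.2 hne
    rw [hhdef]
    have hCfpos : (0 : ℝ) < Cflat := lt_trans one_pos hCf
    have h1 : hPQerm ∈ cset RQ (εQ / Csharp) := hQf.2 hPQmem
    have hbddC : BddBelow (RP '' cset RQ (εQ / Csharp)) := by
      refine ⟨0, ?_⟩
      rintro _ ⟨x, -, rfl⟩
      exact hRP x
    have hne_img : (RP '' cset RQ (εQ / Csharp)).Nonempty := ⟨RP hPQerm, hPQerm, h1, rfl⟩
    have hICF : sInf (RP '' cset RQ (εQ / Csharp)) ≤ sInf (RP '' HQflat) :=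
      csInf_le_csInf hbddC ⟨RP hPQerm, hPQerm, hPQmem, rfl⟩ (Set.image_mono hQf.2)
    rcases le_or_gt (sInf (RP '' HQflat)) (sInf (RP '' cset RQ (εQ / Csharp))) with hc2 | hc2
    · -- the two infima coincide; ĥ itself is in the smod constraint set
      have h2 : excessOn RP (cset RQ (εQ / Csharp)) hPQerm ≤ εtildeP := by
        have : RP hPQerm - sInf (RP '' cset RQ (εQ / Csharp))
            ≤ RP hPQerm - sInf (RP '' HQflat) := sub_le_sub_left hc2 _
        exact le_trans this hPQrate
      have hsmod : (excess RQ hPQerm : EReal) ≤ smod RP RQ (εQ / Csharp) εtildeP :=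
        le_sSup ⟨hPQerm, ⟨h1, h2⟩, rfl⟩
      exact aux_le_mul hCfpos
        (le_mul_of_one_le_left (aux_excess_nonneg RQ hRQ hPQerm) hCf.le) hsmod
    · -- strict gap: a near-minimizer over the big class lies outside Ĥ_Q^♭
      have hlt : sInf (RP '' cset RQ (εQ / Csharp))
          < min (sInf (RP '' HQflat)) (sInf (RP '' cset RQ (εQ / Csharp)) + εtildeP) :=
        lt_min hc2 (by linarith)
      obtain ⟨y, hy, hylt⟩ := (csInf_lt_iff hbddC hne_img).mp hlt
      obtain ⟨h0, h0mem, rfl⟩ := hy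
      have h0flat : h0 ∉ HQflat := by
        intro hcon
        have hbddF : BddBelow (RP '' HQflat) := by
          refine ⟨0, ?_⟩
          rintro _ ⟨x, -, rfl⟩
          exact hRP x
        have : sInf (RP '' HQflat) ≤ RP h0 := csInf_le hbddF ⟨h0, hcon, rfl⟩
        exact absurd this (not_le.mpr (lt_of_lt_of_le hylt (min_le_left _ _)))
      have h0big : εQ / Csharp / Cflat < excess RQ h0 := by
        by_contra hcon
        exact h0flat (hQf.1 (le_of_not_gt hcon))
      have h0On : excessOn RP (cset RQ (εQ / Csharp)) h0 ≤ εtildeP := by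
        have := lt_of_lt_of_le hylt (min_le_right _ _)
        simp only [excessOn]
        linarith
      have hsmod : ((εQ / Csharp / Cflat : ℝ) : EReal) ≤ smod RP RQ (εQ / Csharp) εtildeP :=
        le_trans (EReal.coe_le_coe_iff.mpr h0big.le) (le_sSup ⟨h0, ⟨h0mem, h0On⟩, rfl⟩)
      refine aux_le_mul hCfpos ?_ hsmod
      have : Cflat * (εQ / Csharp / Cflat) = εQ / Csharp := by
        field_simp
      rw [this]
      exact h1
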